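/- Fix an input alphabet A and an output alphabet O, let Mealy := Σ k, (Fin k × (Fin k → A → O × Fin k)) be the type of Mealy machines over A and O (a number of states, a start state, and a step function), and let T be a type. Let F and M_T be the functors from the product category (Type u) × (Type u) to Type u given on objects by F(R, X) = (Σ n : ℕ, (Fin n → A) × ((Fin n → O) → X)) ⊕ (Mealy × R × (List A → X)) and M_T(R, X) = T → (R ⊕ X × T) (with the evident action on morphisms). Then there is a bijection between natural transformations α : F ⟶ M_T and pairs consisting of a family of functions MQᵀ_n : T × (Fin n → A) → (Fin n → O) × T (for every n ∈ ℕ) together with a function EQᵀ : T × Mealy → Option (List A × T). -/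

import Mathlib

open CategoryTheory

/-- The type of Mealy machines over input alphabet `A` and output alphabet `O`:
a number of states `k`, a start state, and a step function. -/
abbrev Mealy (A O : Type) : Type :=
  Σ k : ℕ, Fin k × (Fin k → A → O × Fin k)

/-- The game type of Mealy machine learning:
`F (R, X) = (Σ n, (Fin n → A) × ((Fin n → O) → X)) ⊕ (Mealy × R × (List A → X))`,
where the left summand encodes output queries (whose answers are output words
of matching length) and the right summand encodes equivalence queries. -/
def FMealy (A O : Type) : Type × Type ⥤ Type where
  obj P :=
    (Σ n : ℕ, (Fin n → A) × ((Fin n → O) → P.2)) ⊕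
      (Mealy A O × P.1 × (List A → P.2))
  map f :=
    TypeCat.ofHom (Sum.map
      (fun x => ⟨x.1, x.2.1, fun v => f.2 (x.2.2 v)⟩)
      (fun x => (x.1, f.1 x.2.1, fun w => f.2 (x.2.2 w))))
  map_id := by
    intro P
    ext x
    cases x <;> rfl
  map_comp := by
    intro P Q S f g
    ext x
    cases x <;> rfl

/-- The teacher functor `M_T (R, X) = T → (R ⊕ X × T)`. -/
def MGame (T : Type) : Type × Type ⥤ Type where
  obj P := T → (P.1 ⊕ P.2 × T)
  map f := TypeCat.ofHom fun g t => Sum.map f.1 (Prod.map f.2 id) (g t)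
  map_id := by
    intro P
    ext g t
    dsimp
    cases g t <;> rfl
  map_comp := by
    intro P Q S f g
    ext h t
    dsimp
    cases h t <;> rfl

section Aux

variable {A O T : Type}

/-- Extract the output-query family from a natural transformation. -/
def toMQ (α : FMealy A O ⟶ MGame T) :
    ∀ n : ℕ, T × (Fin n → A) → (Fin n → O) × T := fun n ta =>
  match α.app (PEmpty, Fin n → O)
      (Sum.inl ⟨n, ta.2, id⟩ : (Σ n' : ℕ, (Fin n' → A) × ((Fin n' → O) → (Fin n → O))) ⊕
        (Mealy A O × PEmpty × (List A → (Fin n → O)))) ta.1 with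
  | Sum.inl e => e.elim
  | Sum.inr p => p

/-- Extract the equivalence-query map from a natural transformation. -/
def toEQ (α : FMealy A O ⟶ MGame T) :
    T × Mealy A O → Option (List A × T) := fun tm =>
  match α.app (PUnit, List A)
      (Sum.inr (tm.2, PUnit.unit, id) : (Σ n' : ℕ, (Fin n' → A) × ((Fin n' → O) → List A)) ⊕
        (Mealy A O × PUnit × (List A → List A))) tm.1 with
  | Sum.inl _ => none
  | Sum.inr p => some p

/-- Build a natural transformation from an (MQ, EQ) pair. -/
def ofPair (q : ∀ n : ℕ, T × (Fin n → A) → (Fin n → O) × T)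
    (e : T × Mealy A O → Option (List A × T)) : FMealy A O ⟶ MGame T where
  app P := TypeCat.ofHom fun x t =>
    Sum.elim
      (fun s : Σ n : ℕ, (Fin n → A) × ((Fin n → O) → P.2) =>
        Sum.inr (s.2.2 (q s.1 (t, s.2.1)).1, (q s.1 (t, s.2.1)).2))
      (fun y : Mealy A O × P.1 × (List A → P.2) =>
        Option.elim (e (t, y.1)) (Sum.inl y.2.1)
          (fun wt => Sum.inr (y.2.2 wt.1, wt.2)))
      x
  naturality := by
    intro P Q f
    ext x
    rcases x with s | y
    · rfl
    · funext t
      dsimp [FMealy, MGame]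
      cases e (t, y.1) <;> rfl

end Aux

/-- Teachers in the generic sense (natural transformations `F ⟶ M_T`) for the
Mealy learning game type correspond bijectively to pairs consisting of a
family of output query maps `MQᵀ_n : T × (Fin n → A) → (Fin n → O) × T` and an
equivalence query map `EQᵀ : T × Mealy → Option (List A × T)`. -/
theorem mealy_teacher_characterization (A O T : Type) :
    Nonempty
      ((FMealy A O ⟶ MGame T) ≃
        ((∀ n : ℕ, T × (Fin n → A) → (Fin n → O) × T) ×
          (T × Mealy A O → Option (List A × T)))) := by
  refine ⟨{
    toFun := fun α => (toMQ α, toEQ α)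
    invFun := fun p => ofPair p.1 p.2
    left_inv := ?_
    right_inv := ?_ }⟩
  · intro α
    apply NatTrans.ext
    funext P
    ext x
    rcases x with ⟨n, a, k⟩ | ⟨m, r, k⟩
    · funext t
      have h := congrFun (ConcreteCategory.congr_hom (α.naturality
        (X := (PEmpty, Fin n → O)) (Y := P)
        ((TypeCat.ofHom PEmpty.elim, TypeCat.ofHom k) : (PEmpty, Fin n → O) ⟶ P))
        (Sum.inl ⟨n, a, id⟩ : (Σ n' : ℕ, (Fin n' → A) × ((Fin n' → O) → (Fin n → O))) ⊕ (Mealy A O × PEmpty × (List A → (Fin n → O))))) t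
      dsimp [FMealy, MGame, CategoryTheory.types_comp_apply] at h ⊢
      have h' : α.app P (Sum.inl ⟨n, (a, k)⟩ : (Σ n' : ℕ, (Fin n' → A) × ((Fin n' → O) → P.2)) ⊕ (Mealy A O × P.1 × (List A → P.2))) t =
          Sum.map PEmpty.elim (Prod.map k id)
            (α.app (PEmpty, Fin n → O) (Sum.inl ⟨n, (a, id)⟩ : (Σ n' : ℕ, (Fin n' → A) × ((Fin n' → O) → (Fin n → O))) ⊕ (Mealy A O × PEmpty × (List A → (Fin n → O)))) t) := h
      refine Eq.trans ?_ h'.symm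
      show (ofPair (toMQ α) (toEQ α)).app P (Sum.inl ⟨n, a, k⟩ : (Σ n' : ℕ, (Fin n' → A) × ((Fin n' → O) → P.2)) ⊕ (Mealy A O × P.1 × (List A → P.2))) t = _
      dsimp [ofPair, toMQ, TypeCat.ofHom_apply]
      erw [TypeCat.ofHom_apply]
      dsimp only [Sum.elim_inl]
      cases hs : α.app (PEmpty, Fin n → O) (Sum.inl ⟨n, a, id⟩ : (Σ n' : ℕ, (Fin n' → A) × ((Fin n' → O) → (Fin n → O))) ⊕ (Mealy A O × PEmpty × (List A → (Fin n → O)))) t with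
      | inl e => exact e.elim
      | inr p => simp [hs, Prod.map]
    · funext t
      have h := congrFun (ConcreteCategory.congr_hom (α.naturality
        (X := (PUnit, List A)) (Y := P)
        ((TypeCat.ofHom (fun _ => r), TypeCat.ofHom k) : (PUnit, List A) ⟶ P))
        (Sum.inr (m, PUnit.unit, id) : (Σ n' : ℕ, (Fin n' → A) × ((Fin n' → O) → List A)) ⊕ (Mealy A O × PUnit × (List A → List A)))) t
      dsimp [FMealy, MGame, CategoryTheory.types_comp_apply] at h ⊢
      have h' : α.app P (Sum.inr (m, r, k) : (Σ n' : ℕ, (Fin n' → A) × ((Fin n' → O) → P.2)) ⊕ (Mealy A O × P.1 × (List A → P.2))) t =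
          Sum.map (fun _ => r) (Prod.map k id)
            (α.app (PUnit, List A) (Sum.inr (m, PUnit.unit, id) : (Σ n' : ℕ, (Fin n' → A) × ((Fin n' → O) → List A)) ⊕ (Mealy A O × PUnit × (List A → List A))) t) := h
      refine Eq.trans ?_ h'.symm
      show (ofPair (toMQ α) (toEQ α)).app P (Sum.inr (m, r, k) : (Σ n' : ℕ, (Fin n' → A) × ((Fin n' → O) → P.2)) ⊕ (Mealy A O × P.1 × (List A → P.2))) t = _
      dsimp [ofPair, toEQ, TypeCat.ofHom_apply]
      erw [TypeCat.ofHom_apply]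
      dsimp only [Sum.elim_inr]
      cases hs : α.app (PUnit, List A) (Sum.inr (m, PUnit.unit, id) : (Σ n' : ℕ, (Fin n' → A) × ((Fin n' → O) → List A)) ⊕ (Mealy A O × PUnit × (List A → List A))) t with
      | inl u => simp [hs]
      | inr p => simp [hs, Prod.map]
  · intro p
    rcases p with ⟨q, e⟩
    refine Prod.ext ?_ ?_
    · funext n ta
      dsimp [toMQ, ofPair, TypeCat.ofHom_apply]
      rfl
    · funext tm
      dsimp [toEQ, ofPair, TypeCat.ofHom_apply]
      erw [TypeCat.ofHom_apply]
      dsimp only [Sum.elim_inr]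
      cases e (tm.1, tm.2) <;> rfl
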